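/- Let G be a finite DAG with functional vertices W, and let Z* be the functional closure of a set Z (least superset of Z containing every W-vertex whose parents lie in it). Then in any Bayesian network on G in which each vertex of W has a {0,1}-valued CPT, every vertex V ∈ Z* is functionally determined by Z under the induced distribution Pr: for every instantiation z of Z with Pr(z) > 0 there is a unique state v of V with Pr(v | z) = 1. -/
import Mathlib


attribute [local instance] Classical.propDecidable

/-- The functional closure of `Z`: the least superset of `Z` containing every
vertex of `W` all of whose parents lie in the set. -/
def fclosure {V : Type*} (E : V → V → Prop) (W : Set V) (Z : Set V) : Set V :=
  ⋂₀ {C : Set V | Z ⊆ C ∧ ∀ w ∈ W, (∀ p, E p w → p ∈ C) → w ∈ C}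

/-- In a Bayesian network on a finite DAG in which every vertex of `W`
has a {0,1}-valued CPT, every vertex `T` in the functional closure `Z*` of `Z` is
functionally determined by `Z` under the induced distribution: for every
instantiation `z` of `Z` with `Pr(z) > 0` there is a unique state `x` of `T` with
`Pr(x | z) = 1` (equivalently `Pr(x, z) = Pr(z)`). -/
theorem fclosure_functionally_determined
    {ι : Type*} [Fintype ι] [DecidableEq ι]
    {S : ι → Type*} [∀ i, Fintype (S i)] [∀ i, DecidableEq (S i)]
    (E : ι → ι → Prop)
    (hacyc : ∀ i, ¬ Relation.TransGen E i i)
    (F : (i : ι) → (∀ j, S j) → ℝ)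
    (hloc : ∀ i v w, (∀ j, E j i → v j = w j) → v i = w i → F i v = F i w)
    (hnn : ∀ i v, 0 ≤ F i v)
    (hsum : ∀ i v, ∑ x : S i, F i (Function.update v i x) = 1)
    (W : Set ι)
    (hWfunc : ∀ w ∈ W, ∀ v, F w v = 0 ∨ F w v = 1)
    (Z : Finset ι) :
    ∀ T ∈ fclosure E W (↑Z : Set ι),
    ∀ v : ∀ j, S j,
      0 < (∑ u : ∀ j, S j, if (∀ j ∈ Z, u j = v j) then ∏ i, F i u else 0) →
      ∃! x : S T,
        (∑ u : ∀ j, S j, if ((∀ j ∈ Z, u j = v j) ∧ u T = x) then ∏ i, F i u else 0)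
          = ∑ u : ∀ j, S j, if (∀ j ∈ Z, u j = v j) then ∏ i, F i u else 0 := by
  intro T hT v hpos
  have hPrnn : ∀ u : ∀ j, S j, (0:ℝ) ≤ ∏ i, F i u :=
    fun u => Finset.prod_nonneg (fun i _ => hnn i u)
  -- The key claim: T's value is determined on the support of Pr restricted to z.
  have hTD : ∃ x : S T, ∀ u : ∀ j, S j, (∀ j ∈ Z, u j = v j) → (∏ i, F i u) ≠ 0 →
      u T = x := by
    refine Set.mem_sInter.mp hT
      {i | ∃ x : S i, ∀ u : ∀ j, S j, (∀ j ∈ Z, u j = v j) → (∏ i, F i u) ≠ 0 → u i = x}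
      ⟨?_, ?_⟩
    · intro j hj
      exact ⟨v j, fun u hu _ => hu j hj⟩
    · intro w hw hpar
      obtain ⟨u₀, hu₀⟩ : ∃ u : ∀ j, S j,
          (0:ℝ) < if (∀ j ∈ Z, u j = v j) then ∏ i, F i u else 0 := by
        by_contra h
        push_neg at h
        exact absurd hpos (not_lt.mpr (Finset.sum_nonpos (fun u _ => h u)))
      have hM₀ : ∀ j ∈ Z, u₀ j = v j := by
        by_contra hc
        rw [if_neg hc] at hu₀
        exact lt_irrefl _ hu₀
      rw [if_pos hM₀] at hu₀
      have hsum1 := hsum w u₀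
      have h01 : ∀ x : S w, F w (Function.update u₀ w x) = 0 ∨
          F w (Function.update u₀ w x) = 1 := fun x => hWfunc w hw _
      obtain ⟨x0, hx0⟩ : ∃ x : S w, F w (Function.update u₀ w x) = 1 := by
        by_contra hc
        push_neg at hc
        have hz : ∀ x : S w, F w (Function.update u₀ w x) = 0 := fun x =>
          (h01 x).resolve_right (hc x)
        rw [Finset.sum_eq_zero (fun x _ => hz x)] at hsum1
        norm_num at hsum1
      have hx0uniq : ∀ y : S w, F w (Function.update u₀ w y) = 1 → y = x0 := by
        intro y hy
        by_contra hne
        have hsplit : F w (Function.update u₀ w x0)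
            + ∑ x ∈ Finset.univ.erase x0, F w (Function.update u₀ w x) = 1 := by
          rw [Finset.add_sum_erase Finset.univ
            (fun x => F w (Function.update u₀ w x)) (Finset.mem_univ x0), hsum1]
        have hy' : F w (Function.update u₀ w y) ≤
            ∑ x ∈ Finset.univ.erase x0, F w (Function.update u₀ w x) :=
          Finset.single_le_sum (fun x _ => hnn w _)
            (Finset.mem_erase.mpr ⟨hne, Finset.mem_univ y⟩)
        rw [hy] at hy'
        linarith
      refine ⟨x0, ?_⟩
      intro u hu hune
      by_contra hneT
      have hagree : ∀ p, E p w → u p = u₀ p := by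
        intro p hp
        obtain ⟨xp, hxp⟩ := hpar p hp
        rw [hxp u hu hune, hxp u₀ hM₀ (ne_of_gt hu₀)]
      have hFw : F w u = F w (Function.update u₀ w (u w)) := by
        apply hloc
        · intro j hj
          have hjw : j ≠ w :=
            fun h => hacyc w (Relation.TransGen.single (h ▸ hj))
          rw [Function.update_of_ne hjw]
          exact hagree j hj
        · rw [Function.update_self]
      have hzero : F w (Function.update u₀ w (u w)) = 0 := by
        rcases h01 (u w) with h | h
        · exact h
        · exact absurd (hx0uniq _ h) hneT
      have hFzero : F w u = 0 := by rw [hFw, hzero]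
      exact hune (Finset.prod_eq_zero (Finset.mem_univ w) hFzero)
  obtain ⟨x, hx⟩ := hTD
  have hfirst : (∑ u : ∀ j, S j, if ((∀ j ∈ Z, u j = v j) ∧ u T = x) then ∏ i, F i u else 0)
      = ∑ u : ∀ j, S j, if (∀ j ∈ Z, u j = v j) then ∏ i, F i u else 0 := by
    apply Finset.sum_congr rfl
    intro u _
    by_cases hM : ∀ j ∈ Z, u j = v j
    · by_cases hP : (∏ i, F i u) = 0
      · rw [if_pos hM, hP]
        split_ifs <;> rfl
      · rw [if_pos ⟨hM, hx u hM hP⟩, if_pos hM]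
    · rw [if_neg (fun h => hM h.1), if_neg hM]
  refine ⟨x, hfirst, ?_⟩
  intro y hy
  by_contra hneq
  have hle : (∑ u : ∀ j, S j, if ((∀ j ∈ Z, u j = v j) ∧ u T = x) then ∏ i, F i u else 0)
      + (∑ u : ∀ j, S j, if ((∀ j ∈ Z, u j = v j) ∧ u T = y) then ∏ i, F i u else 0)
      ≤ ∑ u : ∀ j, S j, if (∀ j ∈ Z, u j = v j) then ∏ i, F i u else 0 := by
    rw [← Finset.sum_add_distrib]
    apply Finset.sum_le_sum
    intro u _
    by_cases h1 : (∀ j ∈ Z, u j = v j) ∧ u T = x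
    · have h2 : ¬ ((∀ j ∈ Z, u j = v j) ∧ u T = y) := fun h =>
        hneq (h.2.symm.trans h1.2)
      rw [if_pos h1, if_neg h2, if_pos h1.1, add_zero]
    · by_cases h2 : (∀ j ∈ Z, u j = v j) ∧ u T = y
      · rw [if_neg h1, if_pos h2, if_pos h2.1, zero_add]
      · rw [if_neg h1, if_neg h2, add_zero]
        by_cases hM : ∀ j ∈ Z, u j = v j
        · rw [if_pos hM]; exact hPrnn u
        · rw [if_neg hM]
  rw [hfirst, hy] at hle
  linarith
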